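/- arXiv:1712.07932 — 2 statements merged into one kernel-verified Lean document; each statement's English description precedes it below -/
import Mathlib

section
/- Let f_k(x) be defined by f_0 = 1, f_1 = x, f_{k+2} = x·f_{k+1} − f_k, and define p_{2k}(x) = f_k(x)² and p_{2k+1}(x) = f_k(x)·f_{k+1}(x). Then the generating function ∑_{j≥0} p_j(x)·χ^j equals 1/((1 − χ²)(1 − xχ + χ²)) as a formal power series in χ over ℚ[x]. -/
/-- With `f k` the modified Fibonacci polynomials (`f 0 = 1`, `f 1 = X`,
`f (k+2) = X·f (k+1) − f k`), set `p (2k) = (f k)²` and `p (2k+1) = f k · f (k+1)`.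
Then `∑_{j≥0} p j · χ^j = 1/((1 − χ²)(1 − xχ + χ²))` as formal power series in `χ`
over `ℚ[x]`, i.e. the product of the series with the denominator equals `1`. -/
theorem stmt_1 (f : ℕ → Polynomial ℚ)
    (h0 : f 0 = 1) (h1 : f 1 = Polynomial.X)
    (hrec : ∀ k, f (k + 2) = Polynomial.X * f (k + 1) - f k)
    (p : ℕ → Polynomial ℚ)
    (hpe : ∀ k, p (2 * k) = (f k) ^ 2)
    (hpo : ∀ k, p (2 * k + 1) = f k * f (k + 1)) :
    (PowerSeries.mk p) *
      ((1 - PowerSeries.X ^ 2) *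
        (1 - PowerSeries.C (R := Polynomial ℚ) Polynomial.X * PowerSeries.X
          + PowerSeries.X ^ 2)) = 1 := by
  have key : (PowerSeries.mk p) *
      ((1 - PowerSeries.X ^ 2) *
        (1 - PowerSeries.C (R := Polynomial ℚ) Polynomial.X * PowerSeries.X
          + PowerSeries.X ^ 2)) =
      (PowerSeries.mk p)
        - PowerSeries.C (R := Polynomial ℚ) Polynomial.X * ((PowerSeries.mk p) * PowerSeries.X ^ 1)
        + PowerSeries.C (R := Polynomial ℚ) Polynomial.X * ((PowerSeries.mk p) * PowerSeries.X ^ 3)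
        - (PowerSeries.mk p) * PowerSeries.X ^ 4 := by ring
  rw [key]
  refine PowerSeries.ext fun n => ?_
  simp only [map_sub, map_add, PowerSeries.coeff_C_mul, PowerSeries.coeff_mul_X_pow',
    PowerSeries.coeff_mk, PowerSeries.coeff_one]
  match n with
  | 0 => simp [show p 0 = f 0 ^ 2 from hpe 0, h0]
  | 1 =>
    simp [show p 1 = f 0 * f 1 from hpo 0, show p 0 = f 0 ^ 2 from hpe 0, h0, h1]
  | 2 =>
    have e2 : p 2 = f 1 ^ 2 := hpe 1
    have e1 : p 1 = f 0 * f 1 := hpo 0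
    simp [e2, e1, h0, h1]; ring
  | 3 =>
    have e3 : p 3 = f 1 * f 2 := hpo 1
    have e2 : p 2 = f 1 ^ 2 := hpe 1
    have e0 : p 0 = f 0 ^ 2 := hpe 0
    have r0 : f 2 = Polynomial.X * f 1 - f 0 := hrec 0
    simp [e3, e2, e0, h0, h1, r0]; ring
  | (n + 4) =>
    rcases Nat.even_or_odd n with ⟨m, hm⟩ | ⟨m, hm⟩
    · subst hm
      have e0 : p (m + m + 4) = f (m + 2) ^ 2 := by
        rw [← hpe (m + 2)]; congr 1 <;> omega
      have e1 : p (m + m + 4 - 1) = f (m + 1) * f (m + 2) := by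
        rw [← hpo (m + 1)]; congr 1 <;> omega
      have e3 : p (m + m + 4 - 3) = f m * f (m + 1) := by
        rw [← hpo m]; congr 1 <;> omega
      have e4 : p (m + m + 4 - 4) = f m ^ 2 := by
        rw [← hpe m]; congr 1 <;> omega
      have r : f (m + 2) = Polynomial.X * f (m + 1) - f m := hrec m
      rw [e0, e1, e3, e4, r, if_pos (by omega), if_pos (by omega), if_pos (by omega),
        if_neg (by omega)]
      ring
    · subst hm
      have e0 : p (2 * m + 1 + 4) = f (m + 2) * f (m + 1 + 2) := by
        rw [← hpo (m + 2)]; congr 1 <;> omega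
      have e1 : p (2 * m + 1 + 4 - 1) = f (m + 2) ^ 2 := by
        rw [← hpe (m + 2)]; congr 1 <;> omega
      have e3 : p (2 * m + 1 + 4 - 3) = f (m + 1) ^ 2 := by
        rw [← hpe (m + 1)]; congr 1 <;> omega
      have e4 : p (2 * m + 1 + 4 - 4) = f m * f (m + 1) := by
        rw [← hpo m]; congr 1 <;> omega
      have r : f (m + 2) = Polynomial.X * f (m + 1) - f m := hrec m
      have r' : f (m + 1 + 2) = Polynomial.X * f (m + 1 + 1) - f (m + 1) := hrec (m + 1)
      rw [e0, e1, e3, e4, r', show m + 1 + 1 = m + 2 from rfl, r, if_pos (by omega),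
        if_pos (by omega), if_pos (by omega), if_neg (by omega)]
      ring
end

section
/- For the power series c(x,χ) = 1/((1−χ²)(1−xχ+χ²)) = ∑_{i,j≥0} c_{ij} x^i χ^j, the coefficient c_{ij} vanishes if j − i is odd or if i > j, and c_{i,i+2k} = ∑_{p=0}^{k} (−1)^p · binom(i+p, i). -/
private def S2 (i k : ℕ) : ℚ := ∑ p ∈ Finset.range (k + 1), (-1 : ℚ) ^ p * ((i + p).choose i : ℚ)

private lemma S2_zero (i : ℕ) : S2 i 0 = 1 := by simp [S2]

private lemma S2_succ (i k : ℕ) :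
    S2 i (k + 1) = S2 i k + (-1 : ℚ) ^ (k + 1) * ((i + (k + 1)).choose i : ℚ) := by
  simp [S2, Finset.sum_range_succ]

private lemma S2_zero_left (k : ℕ) : S2 0 (k + 2) = S2 0 k := by
  rw [S2_succ, S2_succ]
  simp [pow_succ]

private lemma S2_one (i : ℕ) : S2 (i + 1) 1 = S2 i 1 - S2 i 0 := by
  rw [S2_succ, S2_succ, S2_zero, S2_zero]
  simp [Nat.choose_succ_self_right]
  ring

private lemma S2_pascal (i k : ℕ) :
    S2 (i + 1) (k + 2) = S2 i (k + 2) - S2 i (k + 1) + S2 (i + 1) k := by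
  rw [S2_succ (i+1) (k+1), S2_succ (i+1) k, S2_succ i (k+1)]
  have h : ((i + k + 3).choose (i + 1) : ℚ) =
      ((i + k + 2).choose i : ℚ) + ((i + k + 2).choose (i + 1) : ℚ) := by
    exact_mod_cast congrArg (Nat.cast : ℕ → ℚ) (Nat.choose_succ_succ (i + k + 2) i)
  have e1 : i + 1 + (k + 1) = i + k + 2 := by omega
  have e2 : i + 1 + (k + 2) = i + k + 3 := by omega
  have e3 : i + (k + 2) = i + k + 2 := by omega
  rw [e1, e2, e3]
  linear_combination (-1 : ℚ) ^ (k + 2) * h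

/-- Write `c(x,χ) = 1/((1−χ²)(1−xχ+χ²)) = ∑_{i,j≥0} c_{ij} x^i χ^j`
(a power series in `χ` over `ℚ[x]`, characterized by `F · (1−χ²)(1−xχ+χ²) = 1`).
Then `c_{ij} = 0` if `j − i` is odd (equivalently `i + j` is odd) or `i > j`, and
`c_{i,i+2k} = ∑_{p=0}^{k} (−1)^p · binom(i+p, i)`. -/
theorem stmt_2 (F : PowerSeries (Polynomial ℚ))
    (hF : F * ((1 - PowerSeries.X ^ 2) *
      (1 - PowerSeries.C (R := Polynomial ℚ) Polynomial.X * PowerSeries.X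
        + PowerSeries.X ^ 2)) = 1) :
    (∀ i j : ℕ, (Odd (i + j) ∨ i > j) →
      (PowerSeries.coeff (R := Polynomial ℚ) j F).coeff i = 0) ∧
    (∀ i k : ℕ, (PowerSeries.coeff (R := Polynomial ℚ) (i + 2 * k) F).coeff i =
      ∑ p ∈ Finset.range (k + 1), (-1 : ℚ) ^ p * ((i + p).choose i : ℚ)) := by
  have hrec : ∀ j : ℕ, PowerSeries.coeff (R := Polynomial ℚ) j F =
      (if j = 0 then 1 else 0)
      + Polynomial.X * (if 1 ≤ j then PowerSeries.coeff (R := Polynomial ℚ) (j-1) F else 0)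
      - Polynomial.X * (if 3 ≤ j then PowerSeries.coeff (R := Polynomial ℚ) (j-3) F else 0)
      + (if 4 ≤ j then PowerSeries.coeff (R := Polynomial ℚ) (j-4) F else 0) := by
    intro j
    have hF' : F = 1 + PowerSeries.C (R := Polynomial ℚ) Polynomial.X * (F * PowerSeries.X ^ 1)
        - PowerSeries.C (R := Polynomial ℚ) Polynomial.X * (F * PowerSeries.X ^ 3)
        + F * PowerSeries.X ^ 4 := by linear_combination hF
    conv_lhs => rw [hF']
    simp only [map_add, map_sub, PowerSeries.coeff_C_mul, PowerSeries.coeff_mul_X_pow',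
      PowerSeries.coeff_one]
  have hc0 : ∀ j : ℕ, (PowerSeries.coeff (R := Polynomial ℚ) j F).coeff 0 =
      (if j = 0 then 1 else 0)
      + (if 4 ≤ j then (PowerSeries.coeff (R := Polynomial ℚ) (j-4) F).coeff 0 else 0) := by
    intro j
    have h := congrArg (fun p => Polynomial.coeff p 0) (hrec j)
    simpa [apply_ite (fun p : Polynomial ℚ => p.coeff 0), Polynomial.mul_coeff_zero] using h
  have hcs : ∀ j i : ℕ, (PowerSeries.coeff (R := Polynomial ℚ) j F).coeff (i+1) =
      (if 1 ≤ j then (PowerSeries.coeff (R := Polynomial ℚ) (j-1) F).coeff i else 0)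
      - (if 3 ≤ j then (PowerSeries.coeff (R := Polynomial ℚ) (j-3) F).coeff i else 0)
      + (if 4 ≤ j then (PowerSeries.coeff (R := Polynomial ℚ) (j-4) F).coeff (i+1) else 0) := by
    intro j i
    have h := congrArg (fun p => Polynomial.coeff p (i+1)) (hrec j)
    simpa [apply_ite (fun p : Polynomial ℚ => p.coeff (i+1)),
      apply_ite (fun p : Polynomial ℚ => p.coeff i), Polynomial.coeff_X_mul,
      Polynomial.coeff_one] using h
  have key : ∀ j : ℕ,
      (∀ i : ℕ, (Odd (i + j) ∨ i > j) → (PowerSeries.coeff (R := Polynomial ℚ) j F).coeff i = 0) ∧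
      (∀ i k : ℕ, j = i + 2 * k →
        (PowerSeries.coeff (R := Polynomial ℚ) j F).coeff i = S2 i k) := by
    intro j
    induction j using Nat.strong_induction_on with
    | _ j IH =>
    constructor
    · intro i hi
      obtain _ | i := i
      · have hj2 : j % 2 = 1 := by
          rcases hi with h | h
          · simpa [Nat.odd_iff] using h
          · omega
        rw [hc0 j, if_neg (by omega)]
        have t4 : (if 4 ≤ j then (PowerSeries.coeff (R := Polynomial ℚ) (j-4) F).coeff 0 else 0)
            = 0 := by
          split_ifs with h
          · exact (IH (j-4) (by omega)).1 0 (Or.inl (Nat.odd_iff.mpr (by omega)))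
          · rfl
        rw [t4]; ring
      · have hi' : (i + 1 + j) % 2 = 1 ∨ i + 1 > j := by
          rcases hi with h | h
          · exact Or.inl (Nat.odd_iff.mp h)
          · exact Or.inr h
        have hz : ∀ j' i' : ℕ, j' < j → ((i' + j') % 2 = 1 ∨ i' > j') →
            (PowerSeries.coeff (R := Polynomial ℚ) j' F).coeff i' = 0 := fun j' i' hlt hc =>
          (IH j' hlt).1 i' (hc.imp Nat.odd_iff.mpr id)
        rw [hcs j i]
        have t1 : (if 1 ≤ j then (PowerSeries.coeff (R := Polynomial ℚ) (j-1) F).coeff i else 0)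
            = 0 := by
          split_ifs with h
          · exact hz (j-1) i (by omega) (by omega)
          · rfl
        have t3 : (if 3 ≤ j then (PowerSeries.coeff (R := Polynomial ℚ) (j-3) F).coeff i else 0)
            = 0 := by
          split_ifs with h
          · exact hz (j-3) i (by omega) (by omega)
          · rfl
        have t4 : (if 4 ≤ j then (PowerSeries.coeff (R := Polynomial ℚ) (j-4) F).coeff (i+1) else 0)
            = 0 := by
          split_ifs with h
          · exact hz (j-4) (i+1) (by omega) (by omega)
          · rfl
        rw [t1, t3, t4]; ring
    · intro i k hjk
      obtain _ | i := i
      · rcases k with _ | _ | k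
        · have hj : j = 0 := by omega
          subst hj
          rw [hc0 0]
          norm_num [S2_zero]
        · have hj : j = 2 := by omega
          subst hj
          rw [hc0 2]
          norm_num [S2, Finset.sum_range_succ]
        · rw [hc0 j, if_neg (by omega), if_pos (by omega),
            (IH (j-4) (by omega)).2 0 k (by omega), S2_zero_left]
          ring
      · rw [hcs j i, if_pos (show 1 ≤ j by omega),
          (IH (j-1) (by omega)).2 i k (by omega)]
        rcases k with _ | _ | k
        · have t3 : (if 3 ≤ j then (PowerSeries.coeff (R := Polynomial ℚ) (j-3) F).coeff i else 0)
              = 0 := by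
            split_ifs with h
            · exact (IH (j-3) (by omega)).1 i (Or.inr (by omega))
            · rfl
          have t4 : (if 4 ≤ j then (PowerSeries.coeff (R := Polynomial ℚ) (j-4) F).coeff (i+1) else 0)
              = 0 := by
            split_ifs with h
            · exact (IH (j-4) (by omega)).1 (i+1) (Or.inr (by omega))
            · rfl
          rw [t3, t4, S2_zero, S2_zero]; ring
        · rw [if_pos (show 3 ≤ j by omega), (IH (j-3) (by omega)).2 i 0 (by omega)]
          have t4 : (if 4 ≤ j then (PowerSeries.coeff (R := Polynomial ℚ) (j-4) F).coeff (i+1) else 0)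
              = 0 := by
            split_ifs with h
            · exact (IH (j-4) (by omega)).1 (i+1) (Or.inr (by omega))
            · rfl
          rw [t4, S2_one]
          norm_num
        · rw [if_pos (show 3 ≤ j by omega), (IH (j-3) (by omega)).2 i (k+1) (by omega),
            if_pos (show 4 ≤ j by omega), (IH (j-4) (by omega)).2 (i+1) k (by omega),
            S2_pascal]
  refine ⟨fun i j hij => (key j).1 i hij, fun i k => ?_⟩
  have h := (key (i + 2 * k)).2 i k rfl
  rw [h]
  rfl
end
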